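/- Let α₁, α₂, α₃ be pairwise coprime positive integers and β₁, β₂ positive integers with α₁β₁ + α₂β₂ = α₁α₂ + α₃. Set d := gcd(α₁ + 2β₂, α₂ + 2β₁). Then gcd(d, α₁α₂ + α₃) = 1. -/
import Mathlib


/-- With α₁, α₂, α₃ pairwise coprime positive integers and β₁, β₂ positive with
α₁β₁ + α₂β₂ = α₁α₂ + α₃, and d = gcd(α₁ + 2β₂, α₂ + 2β₁), one has gcd(d, α₁α₂ + α₃) = 1. -/
theorem gcd_coprime_degree (α₁ α₂ α₃ β₁ β₂ : ℕ) (h₁ : 0 < α₁) (h₂ : 0 < α₂) (h₃ : 0 < α₃)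
    (hβ₁ : 0 < β₁) (hβ₂ : 0 < β₂)
    (h₁₂ : Nat.Coprime α₁ α₂) (h₁₃ : Nat.Coprime α₁ α₃) (h₂₃ : Nat.Coprime α₂ α₃)
    (heq : α₁ * β₁ + α₂ * β₂ = α₁ * α₂ + α₃) :
    Nat.Coprime (Nat.gcd (α₁ + 2 * β₂) (α₂ + 2 * β₁)) (α₁ * α₂ + α₃) := by
  by_contra h
  obtain ⟨p, hp, hpd⟩ := Nat.exists_prime_and_dvd h
  have hA : p ∣ α₁ + 2 * β₂ :=
    hpd.trans ((Nat.gcd_dvd_left _ _).trans (Nat.gcd_dvd_left _ _))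
  have hB : p ∣ α₂ + 2 * β₁ :=
    hpd.trans ((Nat.gcd_dvd_left _ _).trans (Nat.gcd_dvd_right _ _))
  have hN : p ∣ α₁ * α₂ + α₃ := hpd.trans (Nat.gcd_dvd_right _ _)
  have hp2 : p ≠ 2 := by
    rintro rfl
    have d1 : 2 ∣ α₁ := by omega
    have d2 : 2 ∣ α₂ := by omega
    have := Nat.dvd_gcd d1 d2
    rw [h₁₂] at this
    omega
  have hsumeq : α₂ * (α₁ + 2 * β₂) + α₁ * (α₂ + 2 * β₁)
      = 2 * (α₁ * α₂) + 2 * (α₁ * α₂ + α₃) := by rw [← heq]; ring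
  have hsum : p ∣ 2 * (α₁ * α₂) + 2 * (α₁ * α₂ + α₃) := by
    rw [← hsumeq]; exact dvd_add (hA.mul_left _) (hB.mul_left _)
  have h3 : p ∣ 2 * (α₁ * α₂) := (Nat.dvd_add_iff_left (hN.mul_left 2)).mpr hsum
  have h4 : p ∣ α₁ * α₂ := by
    rcases (Nat.Prime.dvd_mul hp).mp h3 with h | h
    · exact absurd ((Nat.prime_dvd_prime_iff_eq hp Nat.prime_two).mp h) hp2
    · exact h
  have h5 : p ∣ α₃ := (Nat.dvd_add_right h4).mp hN
  rcases (Nat.Prime.dvd_mul hp).mp h4 with h | h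
  · have := Nat.dvd_gcd h h5
    rw [h₁₃] at this
    exact hp.one_lt.ne' (Nat.dvd_one.mp this)
  · have := Nat.dvd_gcd h h5
    rw [h₂₃] at this
    exact hp.one_lt.ne' (Nat.dvd_one.mp this)
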